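/- Let R be a commutative G-graded ring and I, J graded radically principal ideals of R. Then the intersection I ∩ J is a graded radically principal ideal of R. -/

import Mathlib

open DirectSum

variable {G A : Type*} [AddGroup G] [DecidableEq G] [CommRing A]

def gradedRadical (𝒜 : G → AddSubgroup A) [GradedRing 𝒜] (I : Ideal A) : Set A :=
  {x | ∀ g : G, ∃ n : ℕ, ((DirectSum.decompose 𝒜 x g : A)) ^ n ∈ I}

def IsGradedRadicallyPrincipal (𝒜 : G → AddSubgroup A) [GradedRing 𝒜] (I : Ideal A) : Prop :=
  ∃ c : A, SetLike.IsHomogeneousElem 𝒜 c ∧ gradedRadical 𝒜 I = gradedRadical 𝒜 (Ideal.span {c})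

def GradedRadicallyPrincipalRing (𝒜 : G → AddSubgroup A) [GradedRing 𝒜] : Prop :=
  ∀ I : Ideal A, I.IsHomogeneous 𝒜 → IsGradedRadicallyPrincipal 𝒜 I

def IsGradedPrime (𝒜 : G → AddSubgroup A) [GradedRing 𝒜] (P : Ideal A) : Prop :=
  P ≠ ⊤ ∧ P.IsHomogeneous 𝒜 ∧
    ∀ ⦃x y : A⦄, SetLike.IsHomogeneousElem 𝒜 x → SetLike.IsHomogeneousElem 𝒜 y → x * y ∈ P →
      x ∈ P ∨ y ∈ P

lemma gradedRadical_inf (𝒜 : G → AddSubgroup A) [GradedRing 𝒜] (I J : Ideal A) :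
    gradedRadical 𝒜 (I ⊓ J) = gradedRadical 𝒜 I ∩ gradedRadical 𝒜 J := by
  apply Set.Subset.antisymm
  · intro x hx
    exact ⟨fun g => (hx g).imp fun n hn => hn.1, fun g => (hx g).imp fun n hn => hn.2⟩
  · rintro x ⟨hx1, hx2⟩ g
    obtain ⟨n, hn⟩ := hx1 g
    obtain ⟨m, hm⟩ := hx2 g
    refine ⟨n + m, ?_, ?_⟩ <;> rw [pow_add]
    · exact Ideal.mul_mem_right _ _ hn
    · exact Ideal.mul_mem_left _ _ hm

theorem stmt_3 (𝒜 : G → AddSubgroup A) [GradedRing 𝒜] (I J : Ideal A)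
    (hI : I.IsHomogeneous 𝒜) (hJ : J.IsHomogeneous 𝒜)
    (hI' : IsGradedRadicallyPrincipal 𝒜 I) (hJ' : IsGradedRadicallyPrincipal 𝒜 J) :
    (I ⊓ J).IsHomogeneous 𝒜 ∧ IsGradedRadicallyPrincipal 𝒜 (I ⊓ J) := by
  refine ⟨hI.inf hJ, ?_⟩
  obtain ⟨c, hc, hcI⟩ := hI'
  obtain ⟨d, hd, hdJ⟩ := hJ'
  refine ⟨c * d, SetLike.IsHomogeneousElem.mul hc hd, ?_⟩
  have h1 : gradedRadical 𝒜 (I ⊓ J) = gradedRadical 𝒜 I ∩ gradedRadical 𝒜 J :=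
    gradedRadical_inf 𝒜 I J
  have h2 : gradedRadical 𝒜 (Ideal.span {c * d}) =
      gradedRadical 𝒜 (Ideal.span {c}) ∩ gradedRadical 𝒜 (Ideal.span {d}) := by
    apply Set.Subset.antisymm
    · intro x hx
      constructor <;> intro g <;> obtain ⟨n, hn⟩ := hx g <;> refine ⟨n, ?_⟩
      · exact Ideal.span_singleton_le_span_singleton.mpr ⟨d, rfl⟩ hn
      · exact Ideal.span_singleton_le_span_singleton.mpr ⟨c, mul_comm c d⟩ hn
    · rintro x ⟨hx1, hx2⟩ g
      obtain ⟨n, hn⟩ := hx1 g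
      obtain ⟨m, hm⟩ := hx2 g
      rw [Ideal.mem_span_singleton] at hn hm
      exact ⟨n + m, Ideal.mem_span_singleton.mpr
        (pow_add (((DirectSum.decompose 𝒜 x g : A))) n m ▸ mul_dvd_mul hn hm)⟩
  rw [h1, h2, hcI, hdJ]
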